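/- For 0 < α < 1, the supremum of |η_α'(x)| over x in (0, π) equals K₁(α) = max{κ_α, 1/κ_α}, where κ_α = α/(1-α). -/

import Mathlib

open Real Set

/-- `sup_{x ∈ (0,π)} |η_α'(x)| = K₁(α) = max{κ_α, 1/κ_α}`, with `κ_α = α/(1-α)`. -/
theorem eta_deriv_sup (α : ℝ) (hα0 : 0 < α) (hα1 : α < 1) :
    sSup ((fun x : ℝ =>
        |deriv (fun y : ℝ => 2 * arctan ((α / (1 - α)) * Real.cot (y / 2))) x|) '' Ioo 0 π)
      = max (α / (1 - α)) ((1 - α) / α) := by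
  have h1α : 0 < 1 - α := by linarith
  set κ : ℝ := α / (1 - α) with hκdef
  have hκ : 0 < κ := div_pos hα0 h1α
  have hprod : κ * ((1 - α) / α) = 1 := by rw [hκdef]; field_simp
  set g : ℝ → ℝ := fun x => κ / (Real.sin (x/2)^2 + κ^2 * Real.cos (x/2)^2) with hgdef
  -- rewrite the function using cos/sin
  have hfun : (fun y : ℝ => 2 * arctan (κ * Real.cot (y / 2)))
      = fun y : ℝ => 2 * arctan (κ * (Real.cos (y/2) / Real.sin (y/2))) := by
    funext y; rw [Real.cot_eq_cos_div_sin]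
  -- the derivative
  have hderiv : ∀ x ∈ Ioo (0:ℝ) π,
      |deriv (fun y : ℝ => 2 * arctan (κ * Real.cot (y / 2))) x| = g x := by
    intro x hx
    obtain ⟨hx0, hxπ⟩ := hx
    have hs : 0 < Real.sin (x/2) :=
      Real.sin_pos_of_pos_of_lt_pi (by linarith) (by linarith [Real.pi_pos])
    have hsne : Real.sin (x/2) ≠ 0 := ne_of_gt hs
    set s := Real.sin (x/2)
    set c := Real.cos (x/2)
    have hpyth : s^2 + c^2 = 1 := Real.sin_sq_add_cos_sq (x/2)
    have hD : 0 < s^2 + κ^2 * c^2 := by nlinarith [sq_nonneg s, sq_nonneg c, sq_nonneg (κ*c)]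
    have h1 : HasDerivAt (fun y : ℝ => y / 2) (1/2) x := (hasDerivAt_id x).div_const 2
    have hc : HasDerivAt (fun y : ℝ => Real.cos (y/2)) (-s * (1/2)) x :=
      by have := (Real.hasDerivAt_cos (x/2)).comp x h1; exact this
    have hsd : HasDerivAt (fun y : ℝ => Real.sin (y/2)) (c * (1/2)) x :=
      by have := (Real.hasDerivAt_sin (x/2)).comp x h1; exact this
    have hq : HasDerivAt (fun y : ℝ => Real.cos (y/2) / Real.sin (y/2))
        ((-s * (1/2) * s - c * (c * (1/2))) / s^2) x := hc.div hsd hsne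
    have hm := hq.const_mul κ
    have ha := (Real.hasDerivAt_arctan (κ * (c / s))).comp x hm
    have hf := ha.const_mul 2
    have hABs : (1 : ℝ) + (κ * (c / s))^2 > 0 := by positivity
    have hnum : -s * (1/2) * s - c * (c * (1/2)) = -(1/2) := by linear_combination (-(1/2)) * hpyth
    have hden : 1 + (κ * (c / s))^2 = (s^2 + κ^2 * c^2) / s^2 := by
      field_simp
    have hval : 2 * (1 / (1 + (κ * (c / s)) ^ 2) *
        (κ * ((-s * (1/2) * s - c * (c * (1/2))) / s ^ 2))) = -κ / (s^2 + κ^2 * c^2) := by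
      rw [hnum, hden, one_div_div]
      field_simp
    have hf' : HasDerivAt (fun y : ℝ => 2 * arctan (κ * (Real.cos (y/2) / Real.sin (y/2))))
        (2 * (1 / (1 + (κ * (c / s)) ^ 2) *
          (κ * ((-s * (1/2) * s - c * (c * (1/2))) / s ^ 2)))) x := hf
    rw [hfun]
    rw [hf'.deriv, hval]
    rw [abs_div, abs_neg, abs_of_pos hκ, abs_of_pos hD]
  have himg : ((fun x : ℝ =>
        |deriv (fun y : ℝ => 2 * arctan (κ * Real.cot (y / 2))) x|) '' Ioo 0 π)
      = g '' Ioo 0 π := image_congr hderiv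
  rw [himg]
  set M : ℝ := max κ ((1 - α) / α) with hM
  have hMκ : κ ≤ M := le_max_left _ _
  have hMκ' : 1 ≤ M * κ := by
    have : (1 - α) / α ≤ M := le_max_right _ _
    nlinarith
  -- bound : g x ≤ M on Ioo 0 π
  have hbound : ∀ x ∈ Ioo (0:ℝ) π, g x ≤ M := by
    intro x hx
    obtain ⟨hx0, hxπ⟩ := hx
    have hs : 0 < Real.sin (x/2) :=
      Real.sin_pos_of_pos_of_lt_pi (by linarith) (by linarith [Real.pi_pos])
    set s := Real.sin (x/2)
    set c := Real.cos (x/2)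
    have hpyth : s^2 + c^2 = 1 := Real.sin_sq_add_cos_sq (x/2)
    have hD : 0 < s^2 + κ^2 * c^2 := by nlinarith [sq_nonneg c, sq_nonneg (κ*c)]
    rw [hgdef]
    rw [div_le_iff₀ hD]
    rcases le_total κ 1 with hκ1 | hκ1
    · have hκ2 : κ^2 ≤ 1 := by nlinarith
      have h2 : κ^2 ≤ s^2 + κ^2 * c^2 := by
        nlinarith [mul_nonneg (sq_nonneg s) (sub_nonneg.2 hκ2), hpyth, sq_nonneg κ]
      have h3 : s^2 + κ^2 * c^2 ≤ M * κ * (s^2 + κ^2 * c^2) :=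
        le_mul_of_one_le_left hD.le hMκ'
      nlinarith [h2, h3, hκ]
    · have hκ2 : (1:ℝ) ≤ κ^2 := by nlinarith
      have hD1 : (1:ℝ) ≤ s^2 + κ^2 * c^2 := by
        nlinarith [mul_nonneg (sq_nonneg c) (sub_nonneg.2 hκ2), hpyth]
      calc κ = κ * 1 := (mul_one κ).symm
        _ ≤ M * (s^2 + κ^2 * c^2) := mul_le_mul hMκ hD1 zero_le_one (hκ.le.trans hMκ)
  have hne : (g '' Ioo 0 π).Nonempty := ⟨g (π/2), ⟨π/2, ⟨by positivity, by linarith [Real.pi_pos]⟩, rfl⟩⟩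
  have hbdd : BddAbove (g '' Ioo 0 π) := by
    refine ⟨M, ?_⟩
    rintro y ⟨x, hx, rfl⟩
    exact hbound x hx
  apply le_antisymm
  · exact csSup_le hne (by rintro y ⟨x, hx, rfl⟩; exact hbound x hx)
  · -- continuity of g where denominator nonzero
    have hgcont : ∀ x : ℝ, Real.sin (x/2)^2 + κ^2 * Real.cos (x/2)^2 ≠ 0 → ContinuousAt g x := by
      intro x hx
      rw [hgdef]
      exact ContinuousAt.div continuousAt_const (by fun_prop) hx
    have hle : ∀ᶠ x in Filter.principal (Ioo (0:ℝ) π), g x ≤ sSup (g '' Ioo 0 π) := by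
      rw [Filter.eventually_principal]
      intro x hx
      exact le_csSup hbdd ⟨x, hx, rfl⟩
    rw [max_le_iff]
    have hev : ∀ᶠ x in Filter.principal (Ioo (0:ℝ) π), g x ≤ sSup (g '' Ioo 0 π) := hle
    constructor
    · -- limit at π : g π = κ
      have hgπ : g π = κ := by
        rw [hgdef]; norm_num [Real.sin_pi_div_two, Real.cos_pi_div_two]
      have hcπ : ContinuousAt g π := hgcont π (by
        norm_num [Real.sin_pi_div_two, Real.cos_pi_div_two])
      have htend : Filter.Tendsto g (nhdsWithin π (Ioo 0 π)) (nhds κ) := by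
        rw [← hgπ]
        exact (hcπ.continuousWithinAt).tendsto
      have hnb : (nhdsWithin π (Ioo (0:ℝ) π)).NeBot := right_nhdsWithin_Ioo_neBot Real.pi_pos
      exact le_of_tendsto htend (Filter.eventually_of_mem self_mem_nhdsWithin
        (fun x hx => le_csSup hbdd ⟨x, hx, rfl⟩))
    · -- limit at 0 : g 0 = 1/κ
      have hg0 : g 0 = (1 - α) / α := by
        have h0 : g 0 = κ / κ ^ 2 := by rw [hgdef]; norm_num
        rw [h0, hκdef, div_eq_div_iff (by positivity) (ne_of_gt hα0)]
        field_simp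
      have hc0 : ContinuousAt g 0 := hgcont 0 (by
        norm_num [Real.sin_zero, Real.cos_zero]; positivity)
      have htend : Filter.Tendsto g (nhdsWithin 0 (Ioo 0 π)) (nhds ((1 - α)/α)) := by
        rw [← hg0]
        exact (hc0.continuousWithinAt).tendsto
      have hnb : (nhdsWithin (0:ℝ) (Ioo (0:ℝ) π)).NeBot := left_nhdsWithin_Ioo_neBot Real.pi_pos
      exact le_of_tendsto htend (Filter.eventually_of_mem self_mem_nhdsWithin
        (fun x hx => le_csSup hbdd ⟨x, hx, rfl⟩))
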